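/- Let Λ_a, Λ_b, Γ be positive definite r × r real matrices with Λ_b^{−1} = Λ_a^{−1} + Γ^{−1}, and let μ_a, μ_b ∈ ℝ^r. Let φ_a and φ_b be the multivariate Gaussian densities N(μ_a, Λ_a) and N(μ_b, Λ_b) on ℝ^r, and set v = Λ_b^{−1} μ_b − Λ_a^{−1} μ_a. Then sup_{y ∈ ℝ^r} φ_b(y)/φ_a(y) = √( (det Λ_a / det Λ_b) · exp( vᵀ Γ v + μ_aᵀ Λ_a^{−1} μ_a − μ_bᵀ Λ_b^{−1} μ_b ) ). -/

import Mathlib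

open Matrix

/-- The multivariate Gaussian density on `ℝ^r` with mean `μ` and covariance `Λ`. -/
noncomputable def gaussianPdf (r : ℕ) (μ : Fin r → ℝ) (Λ : Matrix (Fin r) (Fin r) ℝ)
    (y : Fin r → ℝ) : ℝ :=
  (2 * Real.pi) ^ (-(r : ℝ) / 2) * Λ.det ^ (-(1 : ℝ) / 2) *
    Real.exp (-(1 / 2) * ((y - μ) ⬝ᵥ (Λ⁻¹ *ᵥ (y - μ))))

private lemma symm_dot {r : ℕ} {M : Matrix (Fin r) (Fin r) ℝ} (h : Mᵀ = M)
    (a b : Fin r → ℝ) : a ⬝ᵥ M *ᵥ b = b ⬝ᵥ M *ᵥ a := by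
  rw [Matrix.dotProduct_mulVec, ← Matrix.mulVec_transpose, h, dotProduct_comm]

/-- If `Λ_b⁻¹ = Λ_a⁻¹ + Γ⁻¹` with all three matrices positive definite and
`v = Λ_b⁻¹ μ_b − Λ_a⁻¹ μ_a`, then the supremum over `y ∈ ℝ^r` of the likelihood ratio
`φ_b(y)/φ_a(y)` equals
`√((det Λ_a/det Λ_b) · exp(vᵀ Γ v + μ_aᵀ Λ_a⁻¹ μ_a − μ_bᵀ Λ_b⁻¹ μ_b))`. -/
theorem sup_gaussian_likelihood_ratio_multivariate
    (r : ℕ) (Λa Λb Γ : Matrix (Fin r) (Fin r) ℝ)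
    (hΛa : Λa.PosDef) (hΛb : Λb.PosDef) (hΓ : Γ.PosDef)
    (hrel : Λb⁻¹ = Λa⁻¹ + Γ⁻¹) (μa μb : Fin r → ℝ)
    (v : Fin r → ℝ) (hv : v = Λb⁻¹ *ᵥ μb - Λa⁻¹ *ᵥ μa) :
    (⨆ y : Fin r → ℝ, gaussianPdf r μb Λb y / gaussianPdf r μa Λa y)
      = Real.sqrt ((Λa.det / Λb.det) *
          Real.exp (v ⬝ᵥ (Γ *ᵥ v) + μa ⬝ᵥ (Λa⁻¹ *ᵥ μa) - μb ⬝ᵥ (Λb⁻¹ *ᵥ μb))) := by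
  have hAs : (Λa⁻¹)ᵀ = Λa⁻¹ := hΛa.inv.isHermitian
  have hBs : (Λb⁻¹)ᵀ = Λb⁻¹ := hΛb.inv.isHermitian
  have hCs : (Γ⁻¹)ᵀ = Γ⁻¹ := hΓ.inv.isHermitian
  have hΓs : Γᵀ = Γ := hΓ.isHermitian
  set y0 : Fin r → ℝ := Γ *ᵥ v with hy0
  have hCy0 : Γ⁻¹ *ᵥ y0 = v := by
    rw [hy0, Matrix.mulVec_mulVec, Matrix.nonsing_inv_mul _ (isUnit_iff_ne_zero.mpr hΓ.det_pos.ne'), Matrix.one_mulVec]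
  set E : ℝ := v ⬝ᵥ Γ *ᵥ v + μa ⬝ᵥ Λa⁻¹ *ᵥ μa - μb ⬝ᵥ Λb⁻¹ *ᵥ μb with hE
  -- key quadratic identity
  have key : ∀ y : Fin r → ℝ,
      (y - μb) ⬝ᵥ Λb⁻¹ *ᵥ (y - μb) - (y - μa) ⬝ᵥ Λa⁻¹ *ᵥ (y - μa)
        = (y - y0) ⬝ᵥ Γ⁻¹ *ᵥ (y - y0) - E := by
    intro y
    have h1 : y ⬝ᵥ Λb⁻¹ *ᵥ y = y ⬝ᵥ Λa⁻¹ *ᵥ y + y ⬝ᵥ Γ⁻¹ *ᵥ y := by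
      rw [hrel, Matrix.add_mulVec, dotProduct_add]
    have h2 : μb ⬝ᵥ Λb⁻¹ *ᵥ y = y ⬝ᵥ Λb⁻¹ *ᵥ μb := symm_dot hBs μb y
    have h3 : μa ⬝ᵥ Λa⁻¹ *ᵥ y = y ⬝ᵥ Λa⁻¹ *ᵥ μa := symm_dot hAs μa y
    have h4 : y ⬝ᵥ Γ⁻¹ *ᵥ y0 = y ⬝ᵥ Λb⁻¹ *ᵥ μb - y ⬝ᵥ Λa⁻¹ *ᵥ μa := by
      rw [hCy0, hv, dotProduct_sub]
    have h5 : y0 ⬝ᵥ Γ⁻¹ *ᵥ y = y ⬝ᵥ Γ⁻¹ *ᵥ y0 := symm_dot hCs y0 y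
    have h6 : y0 ⬝ᵥ Γ⁻¹ *ᵥ y0 = v ⬝ᵥ Γ *ᵥ v := by
      rw [hCy0, hy0, dotProduct_comm]
    rw [hE]
    simp only [Matrix.mulVec_sub, dotProduct_sub, sub_dotProduct]
    linarith
  have hda : (0:ℝ) < Λa.det := hΛa.det_pos
  have hdb : (0:ℝ) < Λb.det := hΛb.det_pos
  set S : ℝ := Λb.det ^ (-(1:ℝ)/2) / Λa.det ^ (-(1:ℝ)/2) * Real.exp (E / 2) with hS
  have hratio : ∀ y : Fin r → ℝ,
      gaussianPdf r μb Λb y / gaussianPdf r μa Λa y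
        = S * Real.exp (-(1/2) * ((y - y0) ⬝ᵥ Γ⁻¹ *ᵥ (y - y0))) := by
    intro y
    have hq : Real.exp (-(1/2) * ((y - μb) ⬝ᵥ Λb⁻¹ *ᵥ (y - μb)))
        = Real.exp (-(1/2) * ((y - μa) ⬝ᵥ Λa⁻¹ *ᵥ (y - μa)))
          * (Real.exp (-(1/2) * ((y - y0) ⬝ᵥ Γ⁻¹ *ᵥ (y - y0))) * Real.exp (E/2)) := by
      rw [← Real.exp_add, ← Real.exp_add]
      congr 1
      have := key y
      linarith
    have hea : Real.exp (-(1/2) * ((y - μa) ⬝ᵥ Λa⁻¹ *ᵥ (y - μa))) ≠ 0 := Real.exp_ne_zero _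
    have h2π : (2 * Real.pi) ^ (-(r : ℝ) / 2) ≠ 0 :=
      (Real.rpow_pos_of_pos (by positivity) _).ne'
    have hdae : Λa.det ^ (-(1:ℝ)/2) ≠ 0 := (Real.rpow_pos_of_pos hda _).ne'
    rw [gaussianPdf, gaussianPdf, hq, hS]
    field_simp
  have hS_pos : 0 < S := by
    rw [hS]
    positivity
  have hle : ∀ y, gaussianPdf r μb Λb y / gaussianPdf r μa Λa y ≤ S := by
    intro y
    rw [hratio y]
    have hq : 0 ≤ (y - y0) ⬝ᵥ Γ⁻¹ *ᵥ (y - y0) := by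
      have := hΓ.inv.posSemidef.dotProduct_mulVec_nonneg (y - y0)
      simpa using this
    nlinarith [Real.exp_le_one_iff.mpr (by nlinarith : -(1/2) * ((y - y0) ⬝ᵥ Γ⁻¹ *ᵥ (y - y0)) ≤ 0)]
  have hy0val : gaussianPdf r μb Λb y0 / gaussianPdf r μa Λa y0 = S := by
    rw [hratio y0]
    simp
  have hsup : (⨆ y : Fin r → ℝ, gaussianPdf r μb Λb y / gaussianPdf r μa Λa y) = S := by
    apply le_antisymm
    · exact ciSup_le hle
    · rw [← hy0val]
      exact le_ciSup ⟨S, fun x ⟨y, hy⟩ => hy ▸ hle y⟩ y0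
  rw [hsup]
  -- final algebra
  rw [Real.sqrt_eq_rpow, hS]
  rw [Real.mul_rpow (by positivity) (Real.exp_nonneg _)]
  rw [Real.div_rpow hda.le hdb.le]
  have e1 : Real.exp E ^ ((1:ℝ)/2) = Real.exp (E/2) := by
    rw [← Real.exp_mul, mul_one_div]
  have e2 : Λb.det ^ (-(1:ℝ)/2) = (Λb.det ^ ((1:ℝ)/2))⁻¹ := by
    rw [neg_div, Real.rpow_neg hdb.le]
  have e3 : Λa.det ^ (-(1:ℝ)/2) = (Λa.det ^ ((1:ℝ)/2))⁻¹ := by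
    rw [neg_div, Real.rpow_neg hda.le]
  rw [e1, e2, e3]
  have p1 : (0:ℝ) < Λa.det ^ ((1:ℝ)/2) := Real.rpow_pos_of_pos hda _
  have p2 : (0:ℝ) < Λb.det ^ ((1:ℝ)/2) := Real.rpow_pos_of_pos hdb _
  field_simp
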